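/- Let 𝒞 be a class of matroids closed under isomorphism and under taking minors. If M is a matroid such that M\Y belongs to 𝒞 for every cocircuit Y of M, and N is a minor of M, then N\Y' belongs to 𝒞 for every cocircuit Y' of N. (In particular, the property of having all cocircuits graphic is minor-closed.) -/

import Mathlib

/-! Common definitions for formalizing "On the Interplay between Graphic and
Cographic Matroids with Graphic Cocircuits" (arXiv:0909.5033). -/

section MatroidDefs

variable {α β : Type*}

/-- Deletion of a set of elements from a matroid: `M \ D`. -/
def mDel (M : Matroid α) (D : Set α) : Matroid α := M.restrict (M.E \ D)

/-- Contraction of a set of elements in a matroid: `M / C = (M✶ \ C)✶`. -/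
def mCon (M : Matroid α) (C : Set α) : Matroid α := (mDel M✶ C)✶

/-- `MinorOf N M` means `N` can be obtained from `M` by a sequence of deletions
and contractions. -/
inductive MinorOf : Matroid α → Matroid α → Prop
  | refl (M : Matroid α) : MinorOf M M
  | del {N M : Matroid α} (D : Set α) : MinorOf N M → MinorOf (mDel N D) M
  | con {N M : Matroid α} (C : Set α) : MinorOf N M → MinorOf (mCon N C) M

/-- `C` is a circuit of the matroid `M`: a minimal dependent set. -/
def IsCircuitOf (M : Matroid α) (C : Set α) : Prop :=
  M.Dep C ∧ ∀ D, D ⊂ C → M.Indep D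

/-- `C` is a cocircuit of `M`: a circuit of the dual matroid. -/
def IsCocircuitOf (M : Matroid α) (C : Set α) : Prop := IsCircuitOf M✶ C

/-- Matroid isomorphism: a bijection between the ground sets preserving independence. -/
def MatroidIso (M : Matroid α) (N : Matroid β) : Prop :=
  ∃ f : α → β, Set.BijOn f M.E N.E ∧ ∀ I ⊆ M.E, (M.Indep I ↔ N.Indep (f '' I))

/-- `M` has a minor isomorphic to `N`. -/
def HasMinorIso (M : Matroid α) (N : Matroid β) : Prop :=
  ∃ M₀ : Matroid α, MinorOf M₀ M ∧ MatroidIso M₀ N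

/-- A matroid is simple if it has no circuits of size one or two. -/
def IsSimpleMatroid (M : Matroid α) : Prop :=
  ∀ C, IsCircuitOf M C → C.ncard ≠ 1 ∧ C.ncard ≠ 2

/-- A `k`-separation of a matroid (rank condition phrased via bases of the two sides,
which all have the same cardinality): `r(X) + r(Y) - r(M) ≤ k - 1`. -/
def MatroidKSeparation (M : Matroid α) (k : ℕ) : Prop :=
  ∃ X Y : Set α, X ∪ Y = M.E ∧ Disjoint X Y ∧ k ≤ X.ncard ∧ k ≤ Y.ncard ∧
    ∀ I J B, M.IsBasis I X → M.IsBasis J Y → M.IsBase B →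
      I.ncard + J.ncard + 1 ≤ B.ncard + k

/-- A matroid is 3-connected if it has no 1-separation and no 2-separation. -/
def MatroidThreeConnected (M : Matroid α) : Prop :=
  ¬ MatroidKSeparation M 1 ∧ ¬ MatroidKSeparation M 2

/-- Representability of a matroid over a field `F`. -/
def IsRepresentableOver (M : Matroid α) (F : Type) [Field F] : Prop :=
  ∃ (n : ℕ) (φ : α → (Fin n → F)), ∀ I, I ⊆ M.E →
    (M.Indep I ↔ LinearIndependent F (fun x : I => φ x))

/-- A matroid is regular if it is representable over every field. -/
def IsRegularMatroid (M : Matroid α) : Prop :=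
  ∀ (F : Type) [Field F], IsRepresentableOver M F

end MatroidDefs

section GraphDefs

variable {V W : Type*}

/-- A circle of a graph: the edge set of a cycle. -/
def IsGraphCircle (G : SimpleGraph V) (X : Set (Sym2 V)) : Prop :=
  ∃ (u : V) (c : G.Walk u u), c.IsCycle ∧ X = {e | e ∈ c.edges}

/-- The contraction `G/X` of a set of edges `X` in a graph `G`: vertices are the
connected components of the subgraph formed by the edges of `X`, and distinct
components are adjacent if `G` has an edge outside `X` joining them. -/
def contractGraph (G : SimpleGraph V) (X : Set (Sym2 V)) :
    SimpleGraph (SimpleGraph.fromEdgeSet X ⊓ G).ConnectedComponent :=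
  SimpleGraph.fromRel fun a b => ∃ u v : V, G.Adj u v ∧ s(u, v) ∉ X ∧
    a = (SimpleGraph.fromEdgeSet X ⊓ G).connectedComponentMk u ∧
    b = (SimpleGraph.fromEdgeSet X ⊓ G).connectedComponentMk v

/-- `G` has a minor isomorphic to `H` (branch-set/minor-model definition). -/
def HasGraphMinor (G : SimpleGraph V) (H : SimpleGraph W) : Prop :=
  ∃ φ : W → Set V,
    (∀ w, (φ w).Nonempty) ∧
    (∀ w, ((G.induce (φ w)).Connected)) ∧
    (Pairwise fun w₁ w₂ => Disjoint (φ w₁) (φ w₂)) ∧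
    ∀ ⦃w₁ w₂⦄, H.Adj w₁ w₂ → ∃ v₁ ∈ φ w₁, ∃ v₂ ∈ φ w₂, G.Adj v₁ v₂

/-- The degree of a vertex, as the cardinality of its neighbour set. -/
noncomputable def vDeg (G : SimpleGraph V) (v : V) : ℕ := (G.neighborSet v).ncard

/-- The set of end-vertices of a set of edges. -/
def edgeEndpoints (A : Set (Sym2 V)) : Set V := {v | ∃ e ∈ A, v ∈ e}

/-- A Tutte `k`-separation of a graph: a partition `(A, B)` of the edge set with
`min(|A|,|B|) ≥ k` and exactly `k` vertices in common between `G[A]` and `G[B]`. -/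
def GraphKSeparation (G : SimpleGraph V) (k : ℕ) : Prop :=
  ∃ A B : Set (Sym2 V), A ∪ B = G.edgeSet ∧ Disjoint A B ∧
    k ≤ A.ncard ∧ k ≤ B.ncard ∧ (edgeEndpoints A ∩ edgeEndpoints B).ncard = k

/-- Tutte 3-connectivity of a graph. -/
def GraphThreeConnected (G : SimpleGraph V) : Prop :=
  G.Connected ∧ ¬ GraphKSeparation G 1 ∧ ¬ GraphKSeparation G 2

/-- `M` is the cycle matroid of the graph `G`: the ground set is the edge set of `G`
and the circuits are exactly the circles (edge sets of cycles) of `G`. -/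
def IsCycleMatroidOf (M : Matroid (Sym2 V)) (G : SimpleGraph V) : Prop :=
  M.E = G.edgeSet ∧ ∀ C, IsCircuitOf M C ↔ IsGraphCircle G C

/-- A matroid is graphic if it is isomorphic to the cycle matroid of some graph. -/
def IsGraphicMatroid {α : Type*} (M : Matroid α) : Prop :=
  ∃ (V : Type) (G : SimpleGraph V) (N : Matroid (Sym2 V)),
    IsCycleMatroidOf N G ∧ MatroidIso M N

/-- A matroid is cographic if its dual is graphic. -/
def IsCographicMatroid {α : Type*} (M : Matroid α) : Prop := IsGraphicMatroid M✶

/-- Operation O2 data at a vertex `v`: a partition of the neighbours of `v`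
(of degree at least 4) into two parts of size at least two each (so that both new
vertices have degree greater than 2). -/
def IsO2Partition (G : SimpleGraph V) (v : V) (S₁ S₂ : Set V) : Prop :=
  4 ≤ (G.neighborSet v).ncard ∧ S₁ ∪ S₂ = G.neighborSet v ∧ Disjoint S₁ S₂ ∧
    2 ≤ S₁.ncard ∧ 2 ≤ S₂.ncard

/-- The graph obtained from `G` by operation O2 at `v`, with neighbour partition
`(S₁, S₂)` : the vertex `some v` plays the role of `v₁`, the new vertex `none`
plays the role of `v₂`, and `v₁`, `v₂` are adjacent. -/
def o2Graph (G : SimpleGraph V) (v : V) (S₁ S₂ : Set V) : SimpleGraph (Option V) :=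
  SimpleGraph.fromRel fun a b =>
    (∃ u w, u ≠ v ∧ w ≠ v ∧ G.Adj u w ∧ a = some u ∧ b = some w) ∨
    (∃ u, u ∈ S₁ ∧ a = some v ∧ b = some u) ∨
    (∃ u, u ∈ S₂ ∧ a = none ∧ b = some u) ∨
    (a = some v ∧ b = none)

end GraphDefs

section NamedGraphs

/-- The complete graph `K₅`. -/
def K5 : SimpleGraph (Fin 5) := SimpleGraph.completeGraph (Fin 5)

/-- The complete bipartite graph `K₃,₃`. -/
def K33 : SimpleGraph (Fin 3 ⊕ Fin 3) := completeBipartiteGraph (Fin 3) (Fin 3)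

/-- The complete bipartite graph `K₃,₅`. -/
def K35 : SimpleGraph (Fin 3 ⊕ Fin 5) := completeBipartiteGraph (Fin 3) (Fin 5)

/-- The complete bipartite graph `K₄,₄`. -/
def K44 : SimpleGraph (Fin 4 ⊕ Fin 4) := completeBipartiteGraph (Fin 4) (Fin 4)

/-- `K₄,₄` minus an edge. -/
def K44minus : SimpleGraph (Fin 4 ⊕ Fin 4) :=
  K44.deleteEdges {s(Sum.inl 0, Sum.inr 0)}

/-- The complete bipartite graph `K₃,ₙ`, with side `A` of size 3 and side `B` of size `n`. -/
def K3n (n : ℕ) : SimpleGraph (Fin 3 ⊕ Fin n) := completeBipartiteGraph (Fin 3) (Fin n)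

/-- `K₃,ₙ` plus one edge inside the side `A`. -/
def K3nPlus1 (n : ℕ) : SimpleGraph (Fin 3 ⊕ Fin n) :=
  K3n n ⊔ SimpleGraph.fromEdgeSet {s(Sum.inl 0, Sum.inl 1)}

/-- `K₃,ₙ` plus two edges inside the side `A`. -/
def K3nPlus2 (n : ℕ) : SimpleGraph (Fin 3 ⊕ Fin n) :=
  K3n n ⊔ SimpleGraph.fromEdgeSet {s(Sum.inl 0, Sum.inl 1), s(Sum.inl 0, Sum.inl 2)}

/-- `K₃,ₙ` plus all three edges inside the side `A`. -/
def K3nPlus3 (n : ℕ) : SimpleGraph (Fin 3 ⊕ Fin n) :=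
  K3n n ⊔ SimpleGraph.fromEdgeSet
    {s(Sum.inl 0, Sum.inl 1), s(Sum.inl 0, Sum.inl 2), s(Sum.inl 1, Sum.inl 2)}

/-- The family `{K₃,ₙ, K₃,ₙ⁺¹, K₃,ₙ⁺², K₃,ₙ⁺³}`. -/
def K3nFamily (n : ℕ) : Set (SimpleGraph (Fin 3 ⊕ Fin n)) :=
  {K3n n, K3nPlus1 n, K3nPlus2 n, K3nPlus3 n}

end NamedGraphs

section SignedGraphs

variable {V : Type*}

/-- The number of negative edges of a walk, for a sign function `σ`
(`σ e = false` meaning that `e` is negative). -/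
def negCount (σ : Sym2 V → Bool) {G : SimpleGraph V} {u v : V} (c : G.Walk u v) : ℕ :=
  (c.edges.filter fun e => !σ e).length

/-- Circuits of a signed graph `(G, σ)`: a positive cycle; or two negative cycles
meeting in exactly one vertex; or two vertex-disjoint negative cycles joined by a
path meeting the cycles only in its end vertices. -/
def IsSignedCircuit (G : SimpleGraph V) (σ : Sym2 V → Bool) (C : Set (Sym2 V)) : Prop :=
  (∃ (u : V) (c : G.Walk u u), c.IsCycle ∧ Even (negCount σ c) ∧
      C = {e | e ∈ c.edges}) ∨
  (∃ (w : V) (c₁ c₂ : G.Walk w w), c₁.IsCycle ∧ c₂.IsCycle ∧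
      Odd (negCount σ c₁) ∧ Odd (negCount σ c₂) ∧
      {x | x ∈ c₁.support} ∩ {x | x ∈ c₂.support} = {w} ∧
      C = {e | e ∈ c₁.edges} ∪ {e | e ∈ c₂.edges}) ∨
  (∃ (u v : V) (c₁ : G.Walk u u) (c₂ : G.Walk v v) (p : G.Walk u v),
      c₁.IsCycle ∧ c₂.IsCycle ∧ p.IsPath ∧
      Odd (negCount σ c₁) ∧ Odd (negCount σ c₂) ∧
      {x | x ∈ c₁.support} ∩ {x | x ∈ c₂.support} = ∅ ∧
      {x | x ∈ p.support} ∩ {x | x ∈ c₁.support} = {u} ∧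
      {x | x ∈ p.support} ∩ {x | x ∈ c₂.support} = {v} ∧
      C = {e | e ∈ c₁.edges} ∪ {e | e ∈ c₂.edges} ∪ {e | e ∈ p.edges})

/-- `M` is the signed-graphic matroid of the signed graph `(G, σ)`. -/
def IsSignedGraphicMatroidOf (M : Matroid (Sym2 V)) (G : SimpleGraph V)
    (σ : Sym2 V → Bool) : Prop :=
  M.E = G.edgeSet ∧ ∀ C, IsCircuitOf M C ↔ IsSignedCircuit G σ C

/-- A matroid is signed-graphic if it is isomorphic to the matroid of some signed graph. -/
def IsSignedGraphicMatroid {α : Type*} (M : Matroid α) : Prop :=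
  ∃ (V : Type) (G : SimpleGraph V) (σ : Sym2 V → Bool) (N : Matroid (Sym2 V)),
    IsSignedGraphicMatroidOf N G σ ∧ MatroidIso M N

end SignedGraphs

section AuxLemmas

open Set Matroid

variable {α : Type*} {M : Matroid α} {A B C D T Y I J Z : Set α}

lemma mDel_ground : (mDel M D).E = M.E \ D := rfl

lemma mDel_indep_iff : (mDel M D).Indep I ↔ M.Indep I ∧ I ⊆ M.E \ D :=
  Matroid.restrict_indep_iff

lemma mCon_ground : (mCon M T).E = M.E \ T := rfl

lemma mCon_dual : (mCon M T)✶ = mDel M✶ T := Matroid.dual_dual _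

lemma mDel_dual : (mDel M T)✶ = mCon M✶ T := by
  rw [mCon, Matroid.dual_dual]

lemma mDel_inter_ground : mDel M (D ∩ M.E) = mDel M D := by
  rw [mDel, mDel, Set.diff_inter_self_eq_diff]

lemma mCon_inter_ground : mCon M (T ∩ M.E) = mCon M T := by
  rw [mCon, mCon, show M.E = M✶.E from rfl, mDel_inter_ground]

lemma mDel_mDel (M : Matroid α) (A B : Set α) : mDel (mDel M A) B = mDel M (A ∪ B) := by
  rw [mDel, mDel, mDel, Matroid.restrict_ground_eq, Set.diff_diff]
  exact M.restrict_restrict_eq (Set.diff_subset_diff_right Set.subset_union_left)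

lemma IsCircuitOf.dep (h : IsCircuitOf M C) : M.Dep C := h.1

lemma IsCircuitOf.subset_ground (h : IsCircuitOf M C) : C ⊆ M.E := h.1.subset_ground

/-- Circuits of a deletion are precisely the circuits of `M` avoiding the deleted set. -/
lemma isCircuitOf_mDel_iff : IsCircuitOf (mDel M D) C ↔ IsCircuitOf M C ∧ C ⊆ M.E \ D := by
  constructor
  · rintro ⟨hdep, hmin⟩
    rw [mDel, restrict_dep_iff] at hdep
    refine ⟨⟨⟨hdep.1, hdep.2.trans Set.diff_subset⟩, fun D' hD' => ?_⟩, hdep.2⟩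
    have h' := hmin D' hD'
    rw [mDel, restrict_indep_iff] at h'
    exact h'.1
  · rintro ⟨⟨hdep, hmin⟩, hCE⟩
    refine ⟨?_, fun D' hD' => ?_⟩
    · rw [mDel, restrict_dep_iff]
      exact ⟨hdep.not_indep, hCE⟩
    · rw [mDel, restrict_indep_iff]
      exact ⟨hmin D' hD', hD'.subset.trans hCE⟩

/-- Any basis of `T` can replace any other in an independent union with a set disjoint
from `T`. -/
lemma basis_exchange {J₀ : Set α} (hJ : M.IsBasis J T) (hJ₀ : M.IsBasis J₀ T)
    (hZT : Disjoint Z T) (hZJ : M.Indep (Z ∪ J)) : M.Indep (Z ∪ J₀) := by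
  have hZE : Z ⊆ M.E := Set.subset_union_left.trans hZJ.subset_ground
  have hTE : T ⊆ M.E := hJ.subset_ground
  have hb : M.IsBasis (Z ∪ J) (Z ∪ T) := by
    refine hZJ.isBasis_of_subset_of_subset_closure (Set.union_subset_union_right _ hJ.subset) ?_
    refine Set.union_subset ?_ ?_
    · exact Set.subset_union_left.trans (M.subset_closure (Z ∪ J) hZJ.subset_ground)
    · exact hJ.subset_closure.trans (M.closure_subset_closure Set.subset_union_right)
  obtain ⟨K, hK, hJ₀K, hKsub⟩ :=
    hJ₀.indep.exists_isBasis_subset_union_isBasis (hJ₀.subset.trans Set.subset_union_right) hb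
  have hKT : K ∩ T = J₀ :=
    (hJ₀.eq_of_subset_indep (hK.indep.subset Set.inter_subset_left)
      (Set.subset_inter hJ₀K hJ₀.subset) Set.inter_subset_right).symm
  have hKZJ₀ : K ⊆ Z ∪ J₀ := by
    intro x hx
    rcases hK.subset hx with hxZ | hxT
    · exact Or.inl hxZ
    · exact Or.inr (hKT ▸ ⟨hx, hxT⟩)
  have hZK : Z ⊆ K := by
    intro z hz
    by_contra hzK
    have hzT : z ∉ T := fun h => Set.disjoint_left.1 hZT hz h
    have hzJ : z ∉ J := fun h => hzT (hJ.subset h)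
    have hzcl : z ∈ M.closure K := hK.subset_closure (Or.inl hz)
    have hsub1 : K ⊆ (Z \ {z}) ∪ T := by
      intro x hx
      rcases hKZJ₀ hx with hxZ | hxJ₀
      · exact Or.inl ⟨hxZ, fun hxz => hzK (hxz ▸ hx)⟩
      · exact Or.inr (hJ₀.subset hxJ₀)
    have hz2 : z ∈ M.closure ((Z \ {z}) ∪ T) := M.closure_subset_closure hsub1 hzcl
    have hclT : M.closure ((Z \ {z}) ∪ T) = M.closure ((Z \ {z}) ∪ J) := by
      rw [← M.closure_union_closure_right_eq (Z \ {z}) T,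
        ← hJ.closure_eq_closure, M.closure_union_closure_right_eq]
    have hz3 : z ∈ M.closure ((Z ∪ J) \ {z}) := by
      rw [hclT] at hz2
      refine M.closure_subset_closure ?_ hz2
      intro x hx
      rcases hx with hxZ | hxJ
      · exact ⟨Or.inl hxZ.1, hxZ.2⟩
      · exact ⟨Or.inr hxJ, fun hxz => hzJ (hxz ▸ hxJ)⟩
    exact hZJ.notMem_closure_diff_of_mem (Or.inl hz) hz3
  have hKeq : K = Z ∪ J₀ :=
    Set.Subset.antisymm hKZJ₀ (Set.union_subset hZK hJ₀K)
  exact hKeq ▸ hK.indep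

/-- Independence in a contraction, via bases of the contracted set. -/
lemma mCon_indep_iff (hT : T ⊆ M.E) :
    (mCon M T).Indep I ↔ I ⊆ M.E \ T ∧ ∃ J, M.IsBasis J T ∧ M.Indep (I ∪ J) := by
  have hTE' : M.E \ T ⊆ M✶.E := Set.diff_subset
  rw [mCon, mDel, Matroid.dual_indep_iff_exists']
  simp only [Matroid.restrict_ground_eq]
  constructor
  · rintro ⟨hIE, B', hB', hdisj⟩
    rw [Matroid.isBase_restrict_iff (show M✶.E \ T ⊆ M✶.E from Set.diff_subset)] at hB'
    obtain ⟨Bd, hBd, hB'Bd⟩ := hB'.indep.exists_isBase_superset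
    have hB'eq : Bd ∩ (M.E \ T) = B' :=
      (hB'.eq_of_subset_indep (hBd.indep.subset Set.inter_subset_left)
        (Set.subset_inter hB'Bd hB'.subset) Set.inter_subset_right).symm
    have hBasisB' : M✶.IsBasis (Bd ∩ (M.E \ T)) (M.E \ T) := hB'eq ▸ hB'
    have hdd := (hBd.inter_isBasis_iff_compl_inter_isBasis_dual
      (show M.E \ T ⊆ M✶.E from Set.diff_subset)).1 hBasisB'
    rw [Matroid.dual_dual, Matroid.dual_ground, Set.diff_diff_cancel_left hT] at hdd
    refine ⟨hIE, (M.E \ Bd) ∩ T, hdd, ?_⟩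
    have hBcompl : M.IsBase (M.E \ Bd) := hBd.compl_isBase_of_dual
    refine hBcompl.indep.subset (Set.union_subset ?_ Set.inter_subset_left)
    intro x hx
    refine ⟨(hIE hx).1, fun hxBd => ?_⟩
    exact Set.disjoint_left.1 hdisj hx (hB'eq ▸ ⟨hxBd, hIE hx⟩)
  · rintro ⟨hIE, J, hJ, hIJ⟩
    obtain ⟨B₁, hB₁, hIJB₁⟩ := hIJ.exists_isBase_superset
    have hJeq : B₁ ∩ T = J :=
      (hJ.eq_of_subset_indep (hB₁.indep.subset Set.inter_subset_left)
        (Set.subset_inter (Set.subset_union_right.trans hIJB₁) hJ.subset)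
        Set.inter_subset_right).symm
    have hbasis : M.IsBasis (B₁ ∩ T) T := hJeq ▸ hJ
    have hdd := (hB₁.inter_isBasis_iff_compl_inter_isBasis_dual hT).1 hbasis
    refine ⟨hIE, (M.E \ B₁) ∩ (M.E \ T), ?_, ?_⟩
    · rw [Matroid.isBase_restrict_iff (show M✶.E \ T ⊆ M✶.E from Set.diff_subset)]
      exact hdd
    · exact Set.disjoint_left.2 fun x hxI hx => hx.1.2 (hIJB₁ (Or.inl hxI))

/-- Independence in a contraction, via all bases of the contracted set. -/
lemma mCon_indep_iff_forall (hT : T ⊆ M.E) :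
    (mCon M T).Indep I ↔ I ⊆ M.E \ T ∧ ∀ J, M.IsBasis J T → M.Indep (I ∪ J) := by
  rw [mCon_indep_iff hT]
  constructor
  · rintro ⟨hIE, J, hJ, hIJ⟩
    exact ⟨hIE, fun J₀ hJ₀ =>
      basis_exchange hJ hJ₀ (Set.disjoint_sdiff_left.mono_left hIE) hIJ⟩
  · rintro ⟨hIE, h⟩
    obtain ⟨J, hJ⟩ := M.exists_isBasis T hT
    exact ⟨hIE, J, hJ, h J hJ⟩

/-- Every dependent set contains a circuit. -/
lemma exists_isCircuitOf_subset_of_dep {X : Set α} (hX : M.Dep X) :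
    ∃ C, C ⊆ X ∧ IsCircuitOf M C := by
  obtain ⟨I, hI⟩ := M.exists_isBasis X hX.subset_ground
  have hXI : ¬ X ⊆ I := fun h => hX.not_indep (hI.indep.subset h)
  obtain ⟨e, heX, heI⟩ := Set.not_subset.1 hXI
  have hecl : e ∈ M.closure I := hI.subset_closure heX
  set Js : Set (Set α) := {J | J ⊆ I ∧ e ∈ M.closure J} with hJs
  have hJsne : Js.Nonempty := ⟨I, Set.Subset.rfl, hecl⟩
  set J₀ : Set α := ⋂₀ Js with hJ₀def
  have hJ₀I : J₀ ⊆ I := Set.sInter_subset_of_mem hJsne.some_mem |>.trans hJsne.some_mem.1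
  have hJ₀indep : M.Indep J₀ := hI.indep.subset hJ₀I
  have hecl₀ : e ∈ M.closure J₀ := by
    have hcl := hI.indep.closure_sInter_eq_biInter_closure_of_forall_subset hJsne
      (fun J hJ => hJ.1)
    rw [hJ₀def, hcl]
    exact Set.mem_iInter₂.2 fun J hJ => hJ.2
  have heJ₀ : e ∉ J₀ := fun h => heI (hJ₀I h)
  have heE : e ∈ M.E := hX.subset_ground heX
  refine ⟨insert e J₀, Set.insert_subset heX (hJ₀I.trans hI.subset), ?_, ?_⟩
  · exact hJ₀indep.insert_dep_iff.2 ⟨hecl₀, heJ₀⟩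
  · intro D' hD'
    by_cases heD' : e ∈ D'
    · have hD'' : D' \ {e} ⊆ J₀ := by
        intro x hx
        rcases hD'.subset hx.1 with hxe | hxJ
        · exact absurd hxe hx.2
        · exact hxJ
      have hne : D' \ {e} ≠ J₀ := by
        intro h
        apply hD'.ne
        apply Set.Subset.antisymm hD'.subset
        intro x hx
        rcases hx with hxe | hxJ
        · exact hxe ▸ heD'
        · rw [← h] at hxJ
          exact hxJ.1
      have hssub : D' \ {e} ⊂ J₀ := Set.ssubset_iff_subset_ne.2 ⟨hD'', hne⟩
      have hnotcl : e ∉ M.closure (D' \ {e}) := by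
        intro hcl
        have hmem : D' \ {e} ∈ Js := ⟨hD''.trans hJ₀I, hcl⟩
        exact hssub.not_subset (Set.sInter_subset_of_mem hmem)
      have hind : M.Indep (insert e (D' \ {e})) := by
        rw [(hJ₀indep.subset hD'').insert_indep_iff_of_notMem (fun h => h.2 rfl)]
        exact ⟨heE, hnotcl⟩
      have : insert e (D' \ {e}) = D' := by
        rw [Set.insert_diff_singleton, Set.insert_eq_self.2 heD']
      exact this ▸ hind
    · exact hJ₀indep.subset fun x hx => by
        rcases hD'.subset hx with hxe | hxJ
        · exact absurd hxe fun h => heD' (h ▸ hx)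
        · exact hxJ

/-- Circuit lifting: every circuit of a contraction extends to a circuit of the
original matroid. -/
lemma exists_isCircuitOf_of_mCon (hC : IsCircuitOf (mCon M T) Y) :
    ∃ Y₀, IsCircuitOf M Y₀ ∧ Y₀ \ T = Y := by
  -- First reduce to the case `T ⊆ M.E`.
  rw [← mCon_inter_ground] at hC
  set T' := T ∩ M.E with hT'def
  have hT' : T' ⊆ M.E := Set.inter_subset_right
  -- Main argument
  have hYE : Y ⊆ M.E \ T' := hC.subset_ground
  obtain ⟨J₀, hJ₀⟩ := M.exists_isBasis T' hT'
  have hYJ₀dep : M.Dep (Y ∪ J₀) := by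
    rw [Matroid.dep_iff]
    refine ⟨fun hind => ?_, Set.union_subset (hYE.trans Set.diff_subset) hJ₀.indep.subset_ground⟩
    have : (mCon M T').Indep Y := (mCon_indep_iff hT').2 ⟨hYE, J₀, hJ₀, hind⟩
    exact hC.dep.not_indep this
  obtain ⟨C₀, hC₀sub, hC₀⟩ := exists_isCircuitOf_subset_of_dep hYJ₀dep
  have hZsub : C₀ \ T' ⊆ Y := by
    intro x hx
    rcases hC₀sub hx.1 with hxY | hxJ
    · exact hxY
    · exact absurd (hJ₀.subset hxJ) hx.2
  have hZdep : (mCon M T').Dep (C₀ \ T') := by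
    rw [Matroid.dep_iff]
    constructor
    · intro hind
      rw [mCon_indep_iff_forall hT'] at hind
      have hind' : M.Indep ((C₀ \ T') ∪ J₀) := hind.2 J₀ hJ₀
      have hC₀sub' : C₀ ⊆ (C₀ \ T') ∪ J₀ := by
        intro x hx
        by_cases hxT : x ∈ T'
        · rcases hC₀sub hx with hxY | hxJ
          · exact absurd hxT (hYE hxY).2
          · exact Or.inr hxJ
        · exact Or.inl ⟨hx, hxT⟩
      exact hC₀.dep.not_indep (hind'.subset hC₀sub')
    · rw [mCon_ground]
      exact fun x hx => ⟨hC₀.subset_ground hx.1, hx.2⟩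
  have hZeq : C₀ \ T' = Y := by
    by_contra hne
    have hss : C₀ \ T' ⊂ Y := Set.ssubset_iff_subset_ne.2 ⟨hZsub, hne⟩
    exact hZdep.not_indep (hC.2 _ hss)
  refine ⟨C₀, hC₀, ?_⟩
  rw [← hZeq, hT'def, Set.diff_inter, Set.diff_eq_empty.2 hC₀.subset_ground,
    Set.union_empty]

/-- Deletion and contraction commute for disjoint sets. -/
lemma mDel_mCon_comm (hT : T ⊆ M.E) (hD : D ⊆ M.E) (hdisj : Disjoint D T) :
    mDel (mCon M T) D = mCon (mDel M D) T := by
  have hTD : T ⊆ M.E \ D := Set.subset_diff.2 ⟨hT, hdisj.symm⟩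
  refine Matroid.ext_indep ?_ fun I hI => ?_
  · rw [mDel_ground, mCon_ground, mCon_ground, mDel_ground, Set.diff_diff_comm]
  · rw [mDel_ground, mCon_ground] at hI
    rw [mDel_indep_iff, mCon_indep_iff hT, mCon_ground,
      mCon_indep_iff (show T ⊆ (mDel M D).E from hTD), mDel_ground]
    constructor
    · rintro ⟨⟨hIE, J, hJ, hIJ⟩, hID⟩
      refine ⟨by rwa [Set.diff_diff_comm] at hID, J, ?_, ?_⟩
      · rw [mDel, Matroid.isBasis_restrict_iff (show M.E \ D ⊆ M.E from Set.diff_subset)]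
        exact ⟨hJ, hTD⟩
      · rw [mDel_indep_iff]
        refine ⟨hIJ, Set.union_subset ?_ (hJ.subset.trans hTD)⟩
        exact fun x hx => ⟨(hID hx).1.1, (hID hx).2⟩
    · rintro ⟨hIE, J, hJ, hIJ⟩
      rw [mDel, Matroid.isBasis_restrict_iff (show M.E \ D ⊆ M.E from Set.diff_subset)] at hJ
      rw [mDel_indep_iff] at hIJ
      refine ⟨⟨?_, J, hJ.1, hIJ.1⟩, by rwa [Set.diff_diff_comm] at hIE⟩
      exact fun x hx => ⟨(hIE hx).1.1, (hIE hx).2⟩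

end AuxLemmas

/-- If `𝒞` is a class of matroids closed under isomorphism and minors, `M`
is a matroid all of whose cocircuit-deletions lie in `𝒞`, and `N` is a minor of `M`, then
all cocircuit-deletions of `N` lie in `𝒞`. -/
theorem statement_2 (𝒞 : ∀ ⦃α : Type⦄, Matroid α → Prop)
    (h_iso : ∀ {α β : Type} (M : Matroid α) (N : Matroid β), 𝒞 M → MatroidIso M N → 𝒞 N)
    (h_minor : ∀ {α : Type} (M N : Matroid α), 𝒞 M → MinorOf N M → 𝒞 N)
    {α : Type} (M : Matroid α)
    (hM : ∀ Y, IsCocircuitOf M Y → 𝒞 (mDel M Y))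
    (N : Matroid α) (hN : MinorOf N M) :
    ∀ Y', IsCocircuitOf N Y' → 𝒞 (mDel N Y') := by
  have key : ∀ (N' M' : Matroid α), MinorOf N' M' →
      (∀ Y, IsCocircuitOf M' Y → 𝒞 (mDel M' Y)) →
      ∀ Y', IsCocircuitOf N' Y' → 𝒞 (mDel N' Y') := by
    intro N' M' hmin
    induction hmin with
    | refl M₀ => exact fun h => h
    | @del N₀ M₀ D hm ih =>
      intro hM₀ Y' hY'
      have hY'' : IsCircuitOf (mCon N₀✶ D) Y' := by
        rw [← mDel_dual]
        exact hY'
      obtain ⟨Y, hY, hYD⟩ := exists_isCircuitOf_of_mCon hY''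
      have h𝒞 : 𝒞 (mDel N₀ Y) := ih hM₀ Y hY
      have heq : mDel (mDel N₀ D) Y' = mDel (mDel N₀ Y) D := by
        rw [mDel_mDel, mDel_mDel, ← hYD, Set.union_diff_self, Set.union_comm]
      rw [heq]
      exact h_minor _ _ h𝒞 (MinorOf.del D (MinorOf.refl _))
    | @con N₀ M₀ C hm ih =>
      intro hM₀ Y' hY'
      have hY'' : IsCircuitOf (mDel N₀✶ C) Y' := by
        rw [← mCon_dual]
        exact hY'
      rw [isCircuitOf_mDel_iff] at hY''
      obtain ⟨hYcirc, hYsub⟩ := hY''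
      have h𝒞 : 𝒞 (mDel N₀ Y') := ih hM₀ Y' hYcirc
      have hY'E : Y' ⊆ N₀.E := hYsub.trans Set.diff_subset
      have heq : mDel (mCon N₀ C) Y' = mCon (mDel N₀ Y') (C ∩ N₀.E) := by
        rw [← mCon_inter_ground (M := N₀) (T := C)]
        exact mDel_mCon_comm Set.inter_subset_right hY'E
          (Set.disjoint_left.2 fun x hx hx' => (hYsub hx).2 hx'.1)
      rw [heq]
      exact h_minor _ _ h𝒞 (MinorOf.con _ (MinorOf.refl _))
  exact key N M hN hM
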